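/- Let 0 → F₁ → F → F₂ → 0 be a short exact sequence of additive functors from R-modules to S-modules (exact when evaluated at every module). If F₁ and F₂ preserve filtered colimits, then F preserves filtered colimits. -/

import Mathlib

open CategoryTheory CategoryTheory.Limits

universe v

noncomputable instance stmt1_aux1 (R : Type) [Ring R] :
    PreservesFilteredColimitsOfSize.{v, v} (forget₂ (ModuleCat.{v} R) AddCommGrpCat.{v}) where
  preserves_filtered_colimits J _ _ :=
    { preservesColimit := fun {F} =>
        preservesColimit_of_preserves_colimit_cocone
          (ModuleCat.FilteredColimits.colimitCoconeIsColimit.{v, 0} F)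
          (AddCommGrpCat.FilteredColimits.colimitCoconeIsColimit.{v, 0}
            (F ⋙ forget₂ (ModuleCat.{v} R) AddCommGrpCat.{v})) }

noncomputable instance stmt1_aux2 (R : Type) [Ring R] :
    PreservesFilteredColimitsOfSize.{v, v} (forget (ModuleCat.{v} R)) :=
  Limits.comp_preservesFilteredColimits (forget₂ (ModuleCat R) AddCommGrpCat) (forget AddCommGrpCat)

/-- If `0 → F₁ → F → F₂ → 0` is a short exact sequence of additive functors between
module categories (exact at every module), and `F₁`, `F₂` preserve filtered colimits,
then so does `F`. -/
theorem stmt_1 (R S : Type) [Ring R] [Ring S]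
    (F F₁ F₂ : ModuleCat R ⥤ ModuleCat S) [F.Additive] [F₁.Additive] [F₂.Additive]
    (α : F₁ ⟶ F) (β : F ⟶ F₂)
    (hmono : ∀ M : ModuleCat R, Function.Injective (α.app M))
    (hepi : ∀ M : ModuleCat R, Function.Surjective (β.app M))
    (hexact : ∀ M : ModuleCat R, Function.Exact (α.app M) (β.app M))
    [PreservesFilteredColimits F₁] [PreservesFilteredColimits F₂] :
    PreservesFilteredColimits F := by
  have hαβ : ∀ M : ModuleCat R, α.app M ≫ β.app M = 0 := by
    intro M
    ext x
    exact (hexact M).apply_apply_eq_zero x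
  constructor
  intro J _ _
  constructor
  intro K
  constructor
  intro c₀ hc₀
  haveI : HasColimit K := ⟨⟨⟨c₀, hc₀⟩⟩⟩
  -- the two short complexes
  set c := colimit K with hc
  let S₁ : ShortComplex (ModuleCat S) := ShortComplex.mk
    (colimMap (Functor.whiskerLeft K α)) (colimMap (Functor.whiskerLeft K β)) (by
      apply colimit.hom_ext
      intro j
      simp only [ι_colimMap_assoc, Functor.whiskerLeft_app, ι_colimMap, comp_zero]
      rw [← Category.assoc, hαβ, zero_comp])
  let S₂ : ShortComplex (ModuleCat S) := ShortComplex.mk (α.app c) (β.app c) (hαβ c)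
  let φ : S₁ ⟶ S₂ :=
    { τ₁ := colimit.post K F₁
      τ₂ := colimit.post K F
      τ₃ := colimit.post K F₂
      comm₁₂ := by
        apply colimit.hom_ext
        intro j
        simp only [S₁, ι_colimMap_assoc, Functor.whiskerLeft_app, colimit.ι_post, Functor.comp_obj,
          colimit.ι_post_assoc]
        rw [α.naturality]
      comm₂₃ := by
        apply colimit.hom_ext
        intro j
        simp only [S₁, ι_colimMap_assoc, Functor.whiskerLeft_app, colimit.ι_post, Functor.comp_obj,
          colimit.ι_post_assoc]
        rw [β.naturality] }
  have hS₂ : S₂.ShortExact := by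
    refine ShortComplex.ShortExact.mk' ?_ ?_ ?_
    · rw [ShortComplex.ShortExact.moduleCat_exact_iff_function_exact]
      exact hexact c
    · exact (ModuleCat.mono_iff_injective _).2 (hmono c)
    · exact (ModuleCat.epi_iff_surjective _).2 (hepi c)
  have key : ∀ (G₁ G₂ : ModuleCat R ⥤ ModuleCat S) (γ : G₁ ⟶ G₂) (j : J)
      (z : (K ⋙ G₁).obj j),
      colimMap (Functor.whiskerLeft K γ) (colimit.ι (K ⋙ G₁) j z) =
        colimit.ι (K ⋙ G₂) j (γ.app (K.obj j) z) := by
    intro G₁ G₂ γ j z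
    exact ConcreteCategory.congr_hom (ι_colimMap (Functor.whiskerLeft K γ) j) z
  have keynat : ∀ (G₁ G₂ : ModuleCat R ⥤ ModuleCat S) (γ : G₁ ⟶ G₂) {j k : J} (e : j ⟶ k)
      (z : G₁.obj (K.obj j)),
      γ.app (K.obj k) (G₁.map (K.map e) z) = G₂.map (K.map e) (γ.app (K.obj j) z) := by
    intro G₁ G₂ γ j k e z
    exact ConcreteCategory.congr_hom (γ.naturality (K.map e)) z
  have hS₁ : S₁.ShortExact := by
    refine ShortComplex.ShortExact.mk' ?_ ?_ ?_
    · rw [S₁.moduleCat_exact_iff]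
      intro x hx
      obtain ⟨j, y, rfl⟩ := Concrete.colimit_exists_rep (K ⋙ F) x
      have hx0 : colimMap (Functor.whiskerLeft K β) (colimit.ι (K ⋙ F) j y) = 0 := hx
      rw [key] at hx0
      obtain ⟨k, e, he⟩ := Concrete.colimit_rep_eq_zero S (K ⋙ F₂) j _ hx0
      have he' : β.app (K.obj k) (F.map (K.map e) y) = 0 := by
        rw [keynat F F₂ β e y]
        exact he
      obtain ⟨t, ht⟩ := (hexact (K.obj k) _).1 he'
      refine ⟨colimit.ι (K ⋙ F₁) k t, ?_⟩
      show colimMap (Functor.whiskerLeft K α) (colimit.ι (K ⋙ F₁) k t) = colimit.ι (K ⋙ F) j y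
      rw [key, ht]
      exact colimit.w_apply (K ⋙ F) e y
    · rw [ModuleCat.mono_iff_injective]
      show Function.Injective (colimMap (Functor.whiskerLeft K α))
      rw [injective_iff_map_eq_zero]
      intro x hx
      obtain ⟨j, y, rfl⟩ := Concrete.colimit_exists_rep (K ⋙ F₁) x
      have hx1 : colimMap (Functor.whiskerLeft K α) (colimit.ι (K ⋙ F₁) j y) = 0 := hx
      rw [key] at hx1
      obtain ⟨k, e, he⟩ := Concrete.colimit_rep_eq_zero S (K ⋙ F) j _ hx1
      have he' : α.app (K.obj k) (F₁.map (K.map e) y) = 0 := by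
        rw [keynat F₁ F α e y]
        exact he
      have hy : F₁.map (K.map e) y = 0 := hmono (K.obj k) (by simpa using he')
      calc colimit.ι (K ⋙ F₁) j y
          = colimit.ι (K ⋙ F₁) k ((K ⋙ F₁).map e y) := (colimit.w_apply (K ⋙ F₁) e y).symm
        _ = 0 := by
            have : (K ⋙ F₁).map e y = 0 := hy
            rw [this, map_zero]
    · rw [ModuleCat.epi_iff_surjective]
      show Function.Surjective (colimMap (Functor.whiskerLeft K β))
      intro x
      obtain ⟨j, y, rfl⟩ := Concrete.colimit_exists_rep (K ⋙ F₂) x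
      obtain ⟨t, ht⟩ := hepi (K.obj j) y
      refine ⟨colimit.ι (K ⋙ F) j t, ?_⟩
      show colimMap (Functor.whiskerLeft K β) (colimit.ι (K ⋙ F) j t) = colimit.ι (K ⋙ F₂) j y
      rw [key, ht]
  have : IsIso φ.τ₂ :=
    ShortComplex.isIso₂_of_shortExact_of_isIso₁₃' φ hS₁ hS₂ inferInstance inferInstance
  have : IsIso (colimit.post K F) := this
  exact (preservesColimit_of_isIso_post F K).preserves hc₀
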